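/- Let $(s_n)$ be an eventually non-decreasing sequence of positive real numbers with $s_n \geq 2$ for all $n$, such that $\lim_{n\to\infty} \frac{\log s_{\tau_{n+2}}}{\log s_{\tau_n}} = 1$, where $\tau_n = n(n+1)/2$ is the $n$-th triangular number. Then $\lim_{n\to\infty} \frac{\log s_n}{\log(s_1 s_2 \cdots s_n)} = 0$. -/

import Mathlib

open Filter

theorem stmt1 (s : ℕ → ℝ) (hs : ∀ n, 2 ≤ s n)
    (hmono : ∃ N, ∀ m n, N ≤ m → m ≤ n → s m ≤ s n)
    (hnice : Tendsto
      (fun n => Real.log (s ((n + 2) * (n + 3) / 2)) / Real.log (s (n * (n + 1) / 2)))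
      atTop (nhds 1)) :
    Tendsto (fun n => Real.log (s n) / Real.log (∏ i ∈ Finset.range (n + 1), s i))
      atTop (nhds 0) := by
  obtain ⟨N, hN⟩ := hmono
  have hspos : ∀ n, (0:ℝ) < s n := fun n => lt_of_lt_of_le two_pos (hs n)
  have hLpos : ∀ n, 0 < Real.log (s n) := fun n =>
    Real.log_pos (lt_of_lt_of_le one_lt_two (hs n))
  have hLmono : ∀ m n, N ≤ m → m ≤ n → Real.log (s m) ≤ Real.log (s n) := fun m n h1 h2 =>
    Real.log_le_log (hspos m) (hN m n h1 h2)
  have hprod : ∀ n, Real.log (∏ i ∈ Finset.range (n + 1), s i)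
      = ∑ i ∈ Finset.range (n + 1), Real.log (s i) := fun n =>
    Real.log_prod (fun i _ => (hspos i).ne')
  have hSpos : ∀ n, 0 < ∑ i ∈ Finset.range (n + 1), Real.log (s i) := fun n =>
    Finset.sum_pos (fun i _ => hLpos i) ⟨0, Finset.mem_range.mpr (Nat.succ_pos n)⟩
  -- eventual doubling
  have h2 : ∀ᶠ k in atTop,
      Real.log (s ((k + 2) * (k + 3) / 2)) ≤ 2 * Real.log (s (k * (k + 1) / 2)) := by
    have h := hnice.eventually (eventually_le_nhds (by norm_num : (1:ℝ) < 2))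
    filter_upwards [h] with k hk
    have hp := hLpos (k * (k + 1) / 2)
    rw [div_le_iff₀ hp] at hk
    linarith
  obtain ⟨K₀, hK₀⟩ := eventually_atTop.mp h2
  -- squeeze
  have hup : Tendsto (fun n : ℕ => 4 / ((Nat.sqrt (2 * n) : ℝ) - 2)) atTop (nhds 0) := by
    apply Tendsto.div_atTop tendsto_const_nhds
    have hsq : Tendsto (fun n : ℕ => ((Nat.sqrt (2 * n) : ℝ))) atTop atTop := by
      apply tendsto_natCast_atTop_atTop.comp
      refine tendsto_atTop_atTop.mpr fun b =>
        ⟨b * b, fun a ha => Nat.le_sqrt.mpr (ha.trans (by omega))⟩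
    simpa [sub_eq_add_neg] using tendsto_atTop_add_const_right atTop (-2 : ℝ) hsq
  refine tendsto_of_tendsto_of_tendsto_of_le_of_le' tendsto_const_nhds hup ?_ ?_
  · filter_upwards with n
    rw [hprod n]
    exact div_nonneg (hLpos n).le (hSpos n).le
  · rw [eventually_atTop]
    refine ⟨(K₀ + N + 10) * (K₀ + N + 10), fun n hn => ?_⟩
    rw [hprod n]
    have hjB : K₀ + N + 10 ≤ Nat.sqrt (2 * n) := Nat.le_sqrt.mpr (hn.trans (by omega))
    obtain ⟨a, haj⟩ : ∃ a, Nat.sqrt (2 * n) = a + 3 := ⟨Nat.sqrt (2 * n) - 3, by omega⟩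
    have haB : K₀ + N + 7 ≤ a := by
      have hjB' : K₀ + N + 10 ≤ a + 3 := by rw [← haj]; exact hjB
      omega
    -- triangular helpers
    have tau_mono : ∀ p q : ℕ, p ≤ q → p * (p + 1) / 2 ≤ q * (q + 1) / 2 := by
      intro p q h
      exact Nat.div_le_div_right (Nat.mul_le_mul h (by omega))
    have tau_ge : ∀ p : ℕ, p ≤ p * (p + 1) / 2 := by
      intro p
      rcases Nat.eq_zero_or_pos p with h | h
      · simp [h]
      · rw [Nat.le_div_iff_mul_le (by norm_num)]
        exact Nat.mul_le_mul (le_refl p) (by omega)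
    -- bracketing
    have hsq1 : Nat.sqrt (2 * n) * Nat.sqrt (2 * n) ≤ 2 * n := (by simpa [Nat.pow_two] using Nat.sqrt_le' (2 * n))
    have hsq2 : 2 * n < (Nat.sqrt (2 * n) + 1) * (Nat.sqrt (2 * n) + 1) :=
      (by simpa [Nat.pow_two, Nat.succ_eq_add_one] using Nat.lt_succ_sqrt' (2 * n))
    rw [haj] at hsq1 hsq2
    have hbr1 : (a + 2) * (a + 3) / 2 ≤ n := by
      have h1 : (a + 2) * (a + 3) ≤ 2 * n := by nlinarith
      calc (a + 2) * (a + 3) / 2 ≤ 2 * n / 2 := Nat.div_le_div_right h1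
        _ = n := by omega
    have hbr2 : n ≤ (a + 4) * (a + 5) / 2 := by
      rw [Nat.le_div_iff_mul_le (by norm_num)]
      nlinarith
    have hNn : N ≤ n := by
      have : K₀ + N + 10 ≤ (K₀ + N + 10) * (K₀ + N + 10) := Nat.le_mul_of_pos_left _ (by omega)
      omega
    have hNa : N ≤ a * (a + 1) / 2 := le_trans (by omega) (tau_ge a)
    -- doubling steps
    have step1 := hK₀ a (by omega)
    have step2 := hK₀ (a + 2) (by omega)
    have step2' : Real.log (s ((a + 4) * (a + 5) / 2))
        ≤ 2 * Real.log (s ((a + 2) * (a + 3) / 2)) := by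
      have e1 : (a + 2 + 2) * (a + 2 + 3) = (a + 4) * (a + 5) := by ring
      have e2 : (a + 2) * (a + 2 + 1) = (a + 2) * (a + 3) := by ring
      rwa [e1, e2] at step2
    have hchain : Real.log (s n) ≤ 4 * Real.log (s (a * (a + 1) / 2)) := by
      have h0 : Real.log (s n) ≤ Real.log (s ((a + 4) * (a + 5) / 2)) := hLmono n _ hNn hbr2
      linarith [step1]
    -- sum lower bound
    set c := Real.log (s (a * (a + 1) / 2)) with hc
    have hcpos : 0 < c := hLpos _
    have tau_card : (a + 1) * (a + 2) / 2 - a * (a + 1) / 2 = a + 1 := by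
      have h : (a + 1) * (a + 2) = a * (a + 1) + (a + 1) * 2 := by ring
      rw [h, Nat.add_mul_div_right _ _ (by norm_num : (0:ℕ) < 2)]
      omega
    have hsub : Finset.Ico (a * (a + 1) / 2) ((a + 1) * (a + 2) / 2) ⊆ Finset.range (n + 1) := by
      intro i hi
      rw [Finset.mem_Ico] at hi
      rw [Finset.mem_range]
      have : (a + 1) * (a + 2) / 2 ≤ (a + 2) * (a + 3) / 2 := tau_mono (a + 1) (a + 2) (by omega)
      omega
    have hsum1 : ((a:ℝ) + 1) * c
        ≤ ∑ i ∈ Finset.Ico (a * (a + 1) / 2) ((a + 1) * (a + 2) / 2), Real.log (s i) := by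
      have h := Finset.card_nsmul_le_sum (Finset.Ico (a * (a + 1) / 2) ((a + 1) * (a + 2) / 2))
        (fun i => Real.log (s i)) c ?_
      · rwa [Nat.card_Ico, tau_card, nsmul_eq_mul, Nat.cast_add, Nat.cast_one] at h
      · intro i hi
        rw [Finset.mem_Ico] at hi
        exact hLmono _ i hNa hi.1
    have hsum2 : ((a:ℝ) + 1) * c ≤ ∑ i ∈ Finset.range (n + 1), Real.log (s i) :=
      hsum1.trans (Finset.sum_le_sum_of_subset_of_nonneg hsub fun i _ _ => (hLpos i).le)
    have hcast : (Nat.sqrt (2 * n) : ℝ) - 2 = (a:ℝ) + 1 := by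
      rw [haj]; push_cast; ring
    rw [hcast, div_le_div_iff₀ (hSpos n) (by positivity)]
    have hmul := mul_le_mul_of_nonneg_right hchain (by positivity : (0:ℝ) ≤ (a:ℝ) + 1)
    nlinarith [hLpos n, hSpos n]
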